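/- For the linearized connection D of an Ehresmann connection on a vector bundle E → M, and any vector field X along π (i.e. X ∈ Γ(π*TM)), one has D_{X^H} 𝕀 = −κ(𝓛_Δ X^H), where Δ is the Liouville vector field. Consequently, D_{X^H} 𝕀 = 0 for all X if and only if the horizontal distribution is invariant under the dilations a ↦ e^s a, i.e. the connection is homogeneous. -/

import Mathlib

noncomputable section

/-- Total space of the (locally trivialized) vector bundle `π : E = ℝⁿ × ℝᵐ → M = ℝⁿ`. -/
abbrev EE (n m : ℕ) := (Fin n → ℝ) × (Fin m → ℝ)

/-- The linearized covariant derivative `D_U s` on the pullback bundle `π*E → E` of the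
nonlinear connection with coefficients `Γ` (so `H_i = ∂/∂xⁱ - Γᴬᵢ ∂/∂uᴬ`); for a vector field
`U` on `E` and a section `s` of `π*E`, `D_U s = fderiv s (U) + Σᵢ Uⁱ (∂Γᵢ/∂u) (s)`. -/
def Dlin {n m : ℕ} (Γ : Fin n → EE n m → (Fin m → ℝ))
    (U : EE n m → EE n m) (s : EE n m → (Fin m → ℝ)) (p : EE n m) : Fin m → ℝ :=
  fderiv ℝ s p (U p) + ∑ i, (U p).1 i • fderiv ℝ (fun u => Γ i (p.1, u)) p.2 (s p)

/-- Vertical lift of a section `η` of `π*E`. -/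
def vl {n m : ℕ} (η : EE n m → (Fin m → ℝ)) (p : EE n m) : EE n m := (0, η p)

/-- Horizontal lift of a vector field `X` along `π` with respect to the nonlinear
connection `Γ`. -/
def hl {n m : ℕ} (Γ : Fin n → EE n m → (Fin m → ℝ)) (X : EE n m → (Fin n → ℝ))
    (p : EE n m) : EE n m := (X p, -(∑ i, X p i • Γ i p))

/-- Lie bracket of vector fields on `E`. -/
def lieBr {n m : ℕ} (U W : EE n m → EE n m) (p : EE n m) : EE n m :=
  fderiv ℝ W p (U p) - fderiv ℝ U p (W p)

/-- Curvature tensor of the linearized connection `D`. -/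
def Curv {n m : ℕ} (Γ : Fin n → EE n m → (Fin m → ℝ)) (U W : EE n m → EE n m)
    (s : EE n m → (Fin m → ℝ)) (p : EE n m) : Fin m → ℝ :=
  Dlin Γ U (Dlin Γ W s) p - Dlin Γ W (Dlin Γ U s) p - Dlin Γ (lieBr U W) s p

/-- Connector (vertical projection) of the nonlinear connection. -/
def kc {n m : ℕ} (Γ : Fin n → EE n m → (Fin m → ℝ)) (W : EE n m → EE n m)
    (p : EE n m) : Fin m → ℝ :=
  (W p).2 + ∑ i, (W p).1 i • Γ i p

open ContinuousLinearMap in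
lemma hpart {n m : ℕ} (f : EE n m → Fin m → ℝ) (hf : Differentiable ℝ f) (p : EE n m) :
    fderiv ℝ (fun u => f (p.1, u)) p.2
      = (fderiv ℝ f p).comp (inr ℝ (Fin n → ℝ) (Fin m → ℝ)) := by
  have h1 : HasFDerivAt (fun u : Fin m → ℝ => ((p.1, u) : EE n m))
      (inr ℝ (Fin n → ℝ) (Fin m → ℝ)) p.2 := by
    have h := HasFDerivAt.prodMk (hasFDerivAt_const (𝕜 := ℝ) p.1 p.2) (hasFDerivAt_id p.2)
    exact h
  exact ((hf p).hasFDerivAt.comp p.2 h1).fderiv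

open ContinuousLinearMap in
lemma chain {n m : ℕ} (f : EE n m → Fin m → ℝ) (hf : Differentiable ℝ f)
    (x : Fin n → ℝ) (u : Fin m → ℝ) (t : ℝ) :
    HasDerivAt (fun s : ℝ => f (x, s • u)) (fderiv ℝ f (x, t • u) (0, u)) t := by
  have hc : HasDerivAt (fun s : ℝ => ((x, s • u) : EE n m)) ((0 : Fin n → ℝ), u) t := by
    have := HasDerivAt.prodMk (hasDerivAt_const t x) ((hasDerivAt_id t).smul_const u)
    simpa using this
  have := (hf (x, t • u)).hasFDerivAt.comp_hasDerivAt t hc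
  exact this

lemma hDval {n m : ℕ} (Γ : Fin n → EE n m → (Fin m → ℝ))
    (hΓd : ∀ i, Differentiable ℝ (Γ i)) (X : EE n m → (Fin n → ℝ)) (p : EE n m) :
    Dlin Γ (hl Γ X) (fun q => q.2) p
      = -(∑ i, X p i • Γ i p) + ∑ i, X p i • fderiv ℝ (Γ i) p (0, p.2) := by
  have hsnd : fderiv ℝ (fun q : EE n m => q.2) p = ContinuousLinearMap.snd ℝ _ _ := fderiv_snd
  simp only [Dlin, hl, hsnd]
  simp only [ContinuousLinearMap.coe_snd']
  congr 1
  refine Finset.sum_congr rfl fun i _ => ?_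
  rw [hpart (Γ i) (hΓd i) p]
  simp

lemma euler_of_hom {n m : ℕ} (Γ : Fin n → EE n m → (Fin m → ℝ))
    (hΓd : ∀ i, Differentiable ℝ (Γ i))
    (hom : ∀ lam : ℝ, 0 < lam → ∀ (x : Fin n → ℝ) (u : Fin m → ℝ) (i : Fin n),
      Γ i (x, lam • u) = lam • Γ i (x, u)) (p : EE n m) (i : Fin n) :
    fderiv ℝ (Γ i) p (0, p.2) = Γ i p := by
  have h1 : HasDerivAt (fun t : ℝ => Γ i (p.1, t • p.2))
      (fderiv ℝ (Γ i) (p.1, (1:ℝ) • p.2) (0, p.2)) 1 := chain _ (hΓd i) p.1 p.2 1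
  rw [one_smul] at h1
  have h2 : HasDerivAt (fun t : ℝ => t • Γ i p) (Γ i p) 1 := by
    simpa using (hasDerivAt_id (1:ℝ)).smul_const (Γ i p)
  have hev : (fun t : ℝ => t • Γ i p) =ᶠ[nhds 1] (fun t : ℝ => Γ i (p.1, t • p.2)) := by
    filter_upwards [Ioi_mem_nhds (by norm_num : (0:ℝ) < 1)] with t ht
    rw [hom t ht p.1 p.2 i]
  have h2' : HasDerivAt (fun t : ℝ => Γ i (p.1, t • p.2)) (Γ i p) 1 :=
    h2.congr_of_eventuallyEq hev.symm
  have := h1.unique h2'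
  simpa using this

lemma hom_of_euler {n m : ℕ} (Γ : Fin n → EE n m → (Fin m → ℝ))
    (hΓd : ∀ i, Differentiable ℝ (Γ i))
    (he : ∀ (p : EE n m) (i : Fin n), fderiv ℝ (Γ i) p (0, p.2) = Γ i p)
    (lam : ℝ) (hlam : 0 < lam) (x : Fin n → ℝ) (u : Fin m → ℝ) (i : Fin n) :
    Γ i (x, lam • u) = lam • Γ i (x, u) := by
  set φ : ℝ → (Fin m → ℝ) := fun t => t⁻¹ • Γ i (x, t • u) with hφdef
  have hder : ∀ t ∈ Set.Ioi (0:ℝ), HasDerivWithinAt φ 0 (Set.Ioi 0) t := by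
    intro t ht
    have ht0 : t ≠ 0 := ne_of_gt ht
    have h1 : HasDerivAt (fun s : ℝ => Γ i (x, s • u))
        (fderiv ℝ (Γ i) (x, t • u) (0, u)) t := chain _ (hΓd i) x u t
    have he' : fderiv ℝ (Γ i) (x, t • u) (0, t • u) = Γ i (x, t • u) := by
      simpa using he (x, t • u) i
    have hsm : fderiv ℝ (Γ i) (x, t • u) (0, u) = t⁻¹ • Γ i (x, t • u) := by
      have e : ((0 : Fin n → ℝ), t • u) = t • (((0 : Fin n → ℝ), u) : EE n m) := by
        simp [Prod.smul_mk]
      rw [e, map_smul] at he'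
      rw [← he', smul_smul, inv_mul_cancel₀ ht0, one_smul]
    have h2 : HasDerivAt (fun s : ℝ => s⁻¹) (-(t^2)⁻¹) t := hasDerivAt_inv ht0
    have h3 := h2.smul h1
    rw [hsm] at h3
    have e2 : t⁻¹ • t⁻¹ • Γ i (x, t • u) + (-(t^2)⁻¹) • Γ i (x, t • u) = 0 := by
      rw [smul_smul, ← mul_inv, ← sq, neg_smul, add_neg_cancel]
    rw [e2] at h3
    exact h3.hasDerivWithinAt
  have key := Convex.norm_image_sub_le_of_norm_hasDerivWithin_le
    (C := 0) (f' := fun _ => (0 : Fin m → ℝ)) hder (fun t _ => by simp) (convex_Ioi 0)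
    (Set.mem_Ioi.mpr one_pos) (Set.mem_Ioi.mpr hlam)
  have hφeq : φ lam = φ 1 := by
    have h0 : ‖φ lam - φ 1‖ ≤ 0 := by simpa using key
    exact sub_eq_zero.mp (norm_le_zero_iff.mp h0)
  have h1 : lam⁻¹ • Γ i (x, lam • u) = Γ i (x, u) := by
    simpa [hφdef] using hφeq
  rw [← h1, smul_smul, mul_inv_cancel₀ (ne_of_gt hlam), one_smul]

open ContinuousLinearMap in
lemma part1 {n m : ℕ} (Γ : Fin n → EE n m → (Fin m → ℝ))
    (hΓd : ∀ i, Differentiable ℝ (Γ i)) (X : EE n m → (Fin n → ℝ))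
    (hX : Differentiable ℝ X) (p : EE n m) :
    -(kc Γ (lieBr (vl fun q => q.2) (hl Γ X)) p)
      = -(∑ i, X p i • Γ i p) + ∑ i, X p i • fderiv ℝ (Γ i) p (0, p.2) := by
  have hΔ : fderiv ℝ (vl (fun q : EE n m => q.2)) p
      = (inr ℝ (Fin n → ℝ) (Fin m → ℝ)).comp (snd ℝ (Fin n → ℝ) (Fin m → ℝ)) := by
    have e : (vl (fun q : EE n m => q.2))
        = ⇑((inr ℝ (Fin n → ℝ) (Fin m → ℝ)).comp (snd ℝ (Fin n → ℝ) (Fin m → ℝ))) := rfl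
    rw [e, ContinuousLinearMap.fderiv]
  have hXf : HasFDerivAt X (fderiv ℝ X p) p := (hX p).hasFDerivAt
  have hi : ∀ i : Fin n, HasFDerivAt (fun q => X q i • Γ i q)
      (X p i • fderiv ℝ (Γ i) p + ((proj i).comp (fderiv ℝ X p)).smulRight (Γ i p)) p :=
    fun i => HasFDerivAt.smul (((proj (R := ℝ) (φ := fun _ : Fin n => ℝ) i).hasFDerivAt).comp p hXf) ((hΓd i p).hasFDerivAt)
  have hH : HasFDerivAt (hl Γ X)
      ((fderiv ℝ X p).prod (-(∑ i, (X p i • fderiv ℝ (Γ i) p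
        + ((proj i).comp (fderiv ℝ X p)).smulRight (Γ i p))))) p := by
    exact HasFDerivAt.prodMk hXf (HasFDerivAt.neg (HasFDerivAt.fun_sum (fun i _ => hi i)))
  simp only [kc, lieBr, hΔ, hH.fderiv, vl, hl]
  simp only [ContinuousLinearMap.prod_apply, ContinuousLinearMap.comp_apply,
    ContinuousLinearMap.coe_snd', ContinuousLinearMap.inr_apply,
    ContinuousLinearMap.neg_apply, ContinuousLinearMap.coe_sum', Finset.sum_apply,
    ContinuousLinearMap.add_apply, ContinuousLinearMap.coe_smul', Pi.smul_apply,
    ContinuousLinearMap.smulRight_apply, ContinuousLinearMap.proj_apply,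
    Prod.snd_sub, Prod.fst_sub, sub_zero]
  rw [Finset.sum_add_distrib]
  abel

/-- `D_{X^H} 𝕀 = −κ(𝓛_Δ X^H)` where `Δ = 𝕀^V` is the Liouville vector field
(here `vl (fun q => q.2)`), and `D_{X^H} 𝕀 = 0` for all `X` iff the connection is
homogeneous, i.e. `Γᵢ(x, λ•u) = λ•Γᵢ(x, u)` for all `λ > 0` (invariance of the horizontal
distribution under the dilations `a ↦ e^s a`). -/
theorem tension_and_homogeneity {n m : ℕ}
    (Γ : Fin n → EE n m → (Fin m → ℝ)) (hΓ : ∀ i, ContDiff ℝ (⊤ : ℕ∞) (Γ i)) :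
    (∀ X : EE n m → (Fin n → ℝ), ContDiff ℝ (⊤ : ℕ∞) X → ∀ p : EE n m,
        Dlin Γ (hl Γ X) (fun q => q.2) p
          = -(kc Γ (lieBr (vl fun q => q.2) (hl Γ X)) p)) ∧
    ((∀ (X : EE n m → (Fin n → ℝ)) (p : EE n m),
        Dlin Γ (hl Γ X) (fun q => q.2) p = 0) ↔
      ∀ lam : ℝ, 0 < lam → ∀ (x : Fin n → ℝ) (u : Fin m → ℝ) (i : Fin n),
        Γ i (x, lam • u) = lam • Γ i (x, u)) := by
  have hΓd : ∀ i, Differentiable ℝ (Γ i) := fun i => (hΓ i).differentiable (by norm_num)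
  constructor
  · intro X hXs p
    rw [hDval Γ hΓd X p, part1 Γ hΓd X (hXs.differentiable (by norm_num)) p]
  · constructor
    · intro h lam hlam x u i
      have heuler : ∀ (p : EE n m) (j : Fin n), fderiv ℝ (Γ j) p (0, p.2) = Γ j p := by
        intro p j
        have hz := h (fun _ => Pi.single j 1) p
        rw [hDval Γ hΓd _ p] at hz
        simp only [Pi.single_apply, ite_smul, one_smul, zero_smul,
          Finset.sum_ite_eq', Finset.mem_univ, if_true] at hz
        rw [neg_add_eq_zero] at hz
        exact hz.symm
      exact hom_of_euler Γ hΓd heuler lam hlam x u i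
    · intro hom X p
      rw [hDval Γ hΓd X p]
      have he : ∀ j, fderiv ℝ (Γ j) p (0, p.2) = Γ j p :=
        fun j => euler_of_hom Γ hΓd hom p j
      simp only [he]
      exact neg_add_cancel _
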